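/- Let a ∈ ℝ^n and c ∈ ℝ^n with c_i > 0 for all i. Suppose there exists b ∈ ℝ^n with b_i > 0 for all i such that ∑_i a_i / b_i ≤ min_i (c_i / b_i). If additionally a_i ≥ 0 for all i, then ∑_i a_i / c_i ≤ 1. -/
import Mathlib


open BigOperators Finset

theorem stmt3 {n : ℕ} (hn : 0 < n) (a c : Fin n → ℝ)
    (ha : ∀ i, 0 ≤ a i) (hc : ∀ i, 0 < c i)
    (hb : ∃ b : Fin n → ℝ, (∀ i, 0 < b i) ∧
      ∑ i, a i / b i ≤ (Finset.univ.inf' (by simp [Finset.univ_nonempty_iff]; exact Fin.pos_iff_nonempty.mp hn) fun i => c i / b i)) :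
    ∑ i, a i / c i ≤ 1 := by
  obtain ⟨b, hbpos, hsum⟩ := hb
  have hne : (Finset.univ : Finset (Fin n)).Nonempty := by
    simp [Finset.univ_nonempty_iff]; exact Fin.pos_iff_nonempty.mp hn
  set m := Finset.univ.inf' hne fun i => c i / b i with hm
  have hmpos : 0 < m := by
    obtain ⟨i, _, hi⟩ := Finset.exists_mem_eq_inf' hne fun i => c i / b i
    rw [hm, hi]
    exact div_pos (hc i) (hbpos i)
  have key : ∀ i, a i / c i ≤ a i / (m * b i) := by
    intro i
    have h1 : m ≤ c i / b i := Finset.inf'_le _ (Finset.mem_univ i)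
    have h2 : m * b i ≤ c i := by
      rw [← le_div_iff₀ (hbpos i)]; exact h1
    gcongr
    · exact ha i
    · exact mul_pos hmpos (hbpos i)
  calc ∑ i, a i / c i ≤ ∑ i, a i / (m * b i) := Finset.sum_le_sum fun i _ => key i
    _ = (∑ i, a i / b i) / m := by
        rw [Finset.sum_div]
        congr 1; ext i; rw [div_div, mul_comm]
    _ ≤ m / m := by gcongr
    _ = 1 := div_self hmpos.ne'
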